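/- arXiv:0805.1985 — 2 statements merged into one kernel-verified Lean document; each statement's English description precedes it below -/
import Mathlib

section
/- Let a = a(N), t = t(N) be positive integers with (a,t) = 1, a ≪ N, t ≪ N, and a = o(t) as N → ∞. Then for every ε > 0, (1/t) · Σ_{0≤|j|≤t/2} | Σ_{0≤|r|≤a/2} cos(2πr·t̄/a) · Σ₁(j,r) | ≪_ε N^ε / a. -/
open Finset Filter Asymptotics

noncomputable section

/-- `invMod x n` is the multiplicative inverse of `x` modulo `n` (as a natural number). -/
def invMod (x n : ℕ) : ℕ := ((x : ZMod n))⁻¹.val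

/-- A complete set of residues modulo `a`, represented by integers `r` with `|r| ≤ a/2`. -/
def Ires (a : ℕ) : Finset ℤ := Finset.Icc (-(((a - 1) / 2 : ℕ) : ℤ)) (((a / 2 : ℕ) : ℤ))

/-- The set of all integers `j` with `|j| ≤ t/2`. -/
def IresSym (t : ℕ) : Finset ℤ := Finset.Icc (-((t / 2 : ℕ) : ℤ)) (((t / 2 : ℕ) : ℤ))

/-- `Σ₁(j,r) = 2 ∑_{k ≤ t/2, k ≡ r (mod a)} (cos(2πk/(at)) - 1) cos(2πjk/t)`. -/
def Sigma1 (a t : ℕ) (j r : ℤ) : ℝ :=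
  2 * ∑ k ∈ (Finset.Icc 1 (t / 2)).filter (fun k : ℕ => (k : ℤ) % (a : ℤ) = r % (a : ℤ)),
    (Real.cos (2 * Real.pi * (k : ℝ) / ((a : ℝ) * (t : ℝ))) - 1) *
      Real.cos (2 * Real.pi * (j : ℝ) * (k : ℝ) / (t : ℝ))

/-- `Σ₂(j,r) = 2 ∑_{k ≤ t/2, k ≡ r (mod a)} sin(2πk/(at)) cos(2πjk/t)`. -/
def Sigma2 (a t : ℕ) (j r : ℤ) : ℝ :=
  2 * ∑ k ∈ (Finset.Icc 1 (t / 2)).filter (fun k : ℕ => (k : ℤ) % (a : ℤ) = r % (a : ℤ)),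
    Real.sin (2 * Real.pi * (k : ℝ) / ((a : ℝ) * (t : ℝ))) *
      Real.cos (2 * Real.pi * (j : ℝ) * (k : ℝ) / (t : ℝ))

/-- `M(j,r) = -2 sin(2πjr/t) ∑_{J ≤ t/(2a)} sin(2πJ/t) sin(2πjaJ/t)`. -/
def Mcorr (a t : ℕ) (j r : ℤ) : ℝ :=
  -2 * Real.sin (2 * Real.pi * (j : ℝ) * (r : ℝ) / (t : ℝ)) *
    ∑ J ∈ Finset.Icc 1 (t / (2 * a)),
      Real.sin (2 * Real.pi * (J : ℝ) / (t : ℝ)) *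
        Real.sin (2 * Real.pi * (j : ℝ) * (a : ℝ) * (J : ℝ) / (t : ℝ))


lemma sum_Icc_one' {α : Type*} [AddCommMonoid α] (X : ℕ) (f : ℕ → α) :
    ∑ k ∈ Finset.Icc 1 X, f k = ∑ i ∈ Finset.range X, f (i+1) := by
  rw [← Finset.Ico_add_one_right_eq_Icc, Finset.sum_Ico_eq_sum_range]
  simp [add_comm]

lemma abel_bound (M : ℕ) (g u : ℕ → ℝ) (H B : ℝ) (hH : 0 ≤ H) (hB0 : 0 ≤ B)
    (hg : ∀ k, 1 ≤ k → k ≤ M → -H ≤ g k ∧ g k ≤ 0)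
    (hmono : ∀ k, 1 ≤ k → k + 1 ≤ M → g (k+1) ≤ g k)
    (hB : ∀ X, X ≤ M → |∑ k ∈ Finset.Icc 1 X, u k| ≤ B) :
    |∑ k ∈ Finset.Icc 1 M, g k * u k| ≤ 2 * H * B := by
  rcases Nat.eq_zero_or_pos M with hM | hM
  · simp [hM]; positivity
  have hP : ∀ X, X ≤ M → |∑ i ∈ Finset.range X, u (i+1)| ≤ B := by
    intro X hX
    rw [← sum_Icc_one']
    exact hB X hX
  have key := Finset.sum_range_by_parts (fun i => g (i+1)) (fun i => u (i+1)) M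
  simp only [smul_eq_mul] at key
  rw [sum_Icc_one', key]
  have h1 : |g (M - 1 + 1) * ∑ i ∈ Finset.range M, u (i+1)| ≤ H * B := by
    rw [abs_mul]
    have hgM := hg (M - 1 + 1) (by omega) (by omega)
    exact mul_le_mul (abs_le.mpr ⟨by linarith [hgM.1], by linarith [hgM.2]⟩) (hP M le_rfl)
      (abs_nonneg _) hH
  have h2 : |∑ i ∈ Finset.range (M - 1), (g (i + 1 + 1) - g (i + 1)) * ∑ j ∈ Finset.range (i+1), u (j+1)|
      ≤ H * B := by
    calc |∑ i ∈ Finset.range (M - 1), (g (i + 1 + 1) - g (i + 1)) * ∑ j ∈ Finset.range (i+1), u (j+1)|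
        ≤ ∑ i ∈ Finset.range (M - 1), |(g (i + 1 + 1) - g (i + 1)) * ∑ j ∈ Finset.range (i+1), u (j+1)| :=
          Finset.abs_sum_le_sum_abs _ _
      _ ≤ ∑ i ∈ Finset.range (M - 1), (g (i+1) - g (i+1+1)) * B := by
          apply Finset.sum_le_sum
          intro i hi
          rw [Finset.mem_range] at hi
          rw [abs_mul]
          have hmon := hmono (i+1) (by omega) (by omega)
          rw [abs_of_nonpos (by linarith)]
          have := hP (i+1) (by omega)
          rw [neg_sub]
          apply mul_le_mul le_rfl this (abs_nonneg _) (by linarith)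
      _ = (g 1 - g (M - 1 + 1)) * B := by
          rw [← Finset.sum_mul]
          congr 1
          have := Finset.sum_range_sub' (fun i => g (i+1)) (M-1)
          simpa using this
      _ ≤ H * B := by
          apply mul_le_mul_of_nonneg_right _ hB0
          have := hg 1 le_rfl hM
          have h2 := hg (M - 1 + 1) (by omega) (by omega)
          linarith [this.2, h2.1]
  calc _ ≤ |g (M - 1 + 1) * ∑ i ∈ Finset.range M, u (i+1)| +
        |∑ i ∈ Finset.range (M - 1), (g (i + 1 + 1) - g (i + 1)) * ∑ j ∈ Finset.range (i+1), u (j+1)| :=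
        abs_sub _ _
    _ ≤ 2 * H * B := by linarith



lemma abs_exp_mul_I_sub_one (θ : ℝ) :
    ‖Complex.exp (θ * Complex.I) - 1‖ = 2 * |Real.sin (θ/2)| := by
  have hre1 : (Complex.exp (θ * Complex.I) - 1).re = Real.cos θ - 1 := by
    simp [Complex.exp_ofReal_mul_I_re]
  have him1 : (Complex.exp (θ * Complex.I) - 1).im = Real.sin θ := by
    simp [Complex.exp_ofReal_mul_I_im]
  have hc : Real.cos θ = 1 - 2 * Real.sin (θ/2)^2 := by
    have h1 := Real.sin_sq_add_cos_sq (θ/2)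
    have h2 := Real.cos_two_mul' (θ/2)
    rw [show 2*(θ/2) = θ by ring] at h2
    nlinarith
  have h2 : ‖Complex.exp (θ * Complex.I) - 1‖^2 = (2*|Real.sin (θ/2)|)^2 := by
    rw [Complex.sq_norm, Complex.normSq_apply, hre1, him1]
    have h1 := Real.sin_sq_add_cos_sq θ
    have h3 : |Real.sin (θ/2)|^2 = Real.sin (θ/2)^2 := sq_abs _
    nlinarith
  have := norm_nonneg (Complex.exp (θ * Complex.I) - 1)
  nlinarith [abs_nonneg (Real.sin (θ/2))]

lemma cos_sum_bound {θ : ℝ} (h : Real.sin (θ/2) ≠ 0) (X : ℕ) :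
    |∑ k ∈ Finset.Icc 1 X, Real.cos (θ * k)| ≤ 1 / |Real.sin (θ/2)| := by
  set z : ℂ := Complex.exp (θ * Complex.I) with hz
  have hz1 : z ≠ 1 := by
    intro h1
    rw [hz, Complex.exp_eq_one_iff] at h1
    obtain ⟨n, hn⟩ := h1
    have hθ : θ = (n : ℝ) * (2 * Real.pi) := by
      have h2 : (θ : ℂ) = ((n : ℝ) * (2 * Real.pi) : ℝ) := by
        apply mul_right_cancel₀ Complex.I_ne_zero
        rw [hn]; push_cast; ring
      exact_mod_cast h2
    apply h
    rw [hθ, show (n:ℝ) * (2*Real.pi)/2 = n * Real.pi by ring, Real.sin_int_mul_pi]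
  have hres : ∑ k ∈ Finset.Icc 1 X, Real.cos (θ * k) = (∑ k ∈ Finset.Icc 1 X, z ^ k).re := by
    rw [Complex.re_sum]
    apply Finset.sum_congr rfl
    intro k _
    rw [hz, ← Complex.exp_nat_mul, show (k:ℂ) * (θ*Complex.I) = ((θ*k : ℝ):ℂ) * Complex.I by push_cast; ring,
      Complex.exp_ofReal_mul_I_re]
  have hgeom : ∑ k ∈ Finset.Icc 1 X, z ^ k = (z ^ X - 1)/(z - 1) * z := by
    rw [sum_Icc_one']
    simp_rw [pow_succ]
    rw [← Finset.sum_mul, geom_sum_eq hz1]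
  have habs1 : ‖z‖ = 1 := Complex.norm_exp_ofReal_mul_I θ
  have hsin : 0 < |Real.sin (θ/2)| := abs_pos.mpr h
  have habsz1 : ‖z - 1‖ = 2 * |Real.sin (θ/2)| := abs_exp_mul_I_sub_one θ
  rw [hres]
  calc |(∑ k ∈ Finset.Icc 1 X, z ^ k).re| ≤ ‖∑ k ∈ Finset.Icc 1 X, z ^ k‖ :=
        Complex.abs_re_le_norm _
    _ = ‖z ^ X - 1‖ / (2 * |Real.sin (θ/2)|) := by
        rw [hgeom, norm_mul, norm_div, habs1, habsz1, mul_one]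
    _ ≤ 2 / (2 * |Real.sin (θ/2)|) := by
        rw [div_le_div_iff_of_pos_right (by positivity)]
        have h3 : ‖z^X - 1‖ ≤ ‖z^X‖ + ‖(1:ℂ)‖ := by
          simpa [sub_eq_add_neg] using norm_add_le (z^X) (-1)
        rw [show (2:ℝ) = 1 + 1 by norm_num]; simpa [norm_pow, habs1] using h3
    _ = 1 / |Real.sin (θ/2)| := by field_simp


noncomputable def PhiB (A T : ℕ) (n : ℤ) : ℝ :=
  if ((A*T : ℕ):ℤ) ∣ n then ((T/2 : ℕ):ℝ) else 1/|Real.sin (Real.pi * (n:ℝ) / ((A:ℝ)*(T:ℝ)))|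

lemma PhiB_nonneg (A T : ℕ) (n : ℤ) : 0 ≤ PhiB A T n := by
  unfold PhiB; split <;> positivity

lemma one_sub_cos_le (x : ℝ) : 1 - Real.cos x ≤ x^2/2 := by
  have h1 := Real.sin_sq_add_cos_sq (x/2)
  have h2 := Real.cos_two_mul' (x/2)
  rw [show 2*(x/2) = x by ring] at h2
  rcases eq_or_ne x 0 with h | h
  · simp [h]
  · have h3 := Real.sin_sq_lt_sq (show x/2 ≠ 0 by intro hc; apply h; linarith)
    nlinarith


lemma gsum_bound (A T : ℕ) (hA : 0 < A) (hT : 0 < T) (n : ℤ) :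
    |∑ k ∈ Finset.Icc 1 (T/2),
        (Real.cos (2*Real.pi*(k:ℝ)/((A:ℝ)*(T:ℝ))) - 1) *
          Real.cos ((2*Real.pi*(n:ℝ)/((A:ℝ)*(T:ℝ))) * (k:ℝ))|
      ≤ 2 * (Real.pi^2/(2*(A:ℝ)^2)) * PhiB A T n := by
  have hA' : (0:ℝ) < A := by exact_mod_cast hA
  have hT' : (0:ℝ) < T := by exact_mod_cast hT
  apply abel_bound (T/2) _ _ _ _ (by positivity) (PhiB_nonneg A T n)
  · -- range of g
    intro k hk1 hk2
    have hk2' : (k:ℝ) ≤ (T:ℝ)/2 := by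
      have : (k:ℝ) ≤ ((T/2 : ℕ):ℝ) := by exact_mod_cast hk2
      calc (k:ℝ) ≤ ((T/2 : ℕ):ℝ) := this
        _ ≤ (T:ℝ)/2 := by
          have := Nat.div_mul_le_self T 2
          have h2 : ((T/2 : ℕ):ℝ) * 2 ≤ (T:ℝ) := by exact_mod_cast this
          linarith
    constructor
    · have hle := one_sub_cos_le (2*Real.pi*(k:ℝ)/((A:ℝ)*(T:ℝ)))
      have harg : 0 ≤ 2*Real.pi*(k:ℝ)/((A:ℝ)*(T:ℝ)) := by positivity
      have harg2 : 2*Real.pi*(k:ℝ)/((A:ℝ)*(T:ℝ)) ≤ Real.pi/(A:ℝ) := by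
        rw [div_le_div_iff₀ (by positivity) hA']
        have hpi := Real.pi_pos
        have h2k : (k:ℝ) * 2 ≤ (T:ℝ) := by linarith
        nlinarith [mul_le_mul_of_nonneg_left h2k (mul_pos hpi hA').le]
      have hsq : (2*Real.pi*(k:ℝ)/((A:ℝ)*(T:ℝ)))^2/2 ≤ Real.pi^2/(2*(A:ℝ)^2) := by
        rw [div_le_div_iff₀ (by norm_num) (by positivity)]
        have h0 : (2*Real.pi*(k:ℝ)/((A:ℝ)*(T:ℝ)))^2 ≤ (Real.pi/(A:ℝ))^2 := by
          apply pow_le_pow_left₀ harg harg2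
        have : (Real.pi/(A:ℝ))^2 = Real.pi^2/(A:ℝ)^2 := by rw [div_pow]
        rw [this] at h0
        have hA2 : (0:ℝ) < (A:ℝ)^2 := by positivity
        calc (2*Real.pi*(k:ℝ)/((A:ℝ)*(T:ℝ)))^2 * (2*(A:ℝ)^2)
            ≤ (Real.pi^2/(A:ℝ)^2) * (2*(A:ℝ)^2) := by nlinarith
          _ = Real.pi^2 * 2 := by field_simp
      linarith
    · have := Real.cos_le_one (2*Real.pi*(k:ℝ)/((A:ℝ)*(T:ℝ)))
      linarith
  · -- monotone
    intro k hk1 hk2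
    have hk2' : (k:ℝ)+1 ≤ (T:ℝ)/2 := by
      have : ((k+1 : ℕ):ℝ) ≤ ((T/2 : ℕ):ℝ) := by exact_mod_cast hk2
      have h2 : ((T/2 : ℕ):ℝ) * 2 ≤ (T:ℝ) := by exact_mod_cast Nat.div_mul_le_self T 2
      push_cast at this
      linarith
    have hpi := Real.pi_pos
    have h1A : (1:ℝ) ≤ A := by exact_mod_cast hA
    apply sub_le_sub_right
    apply Real.cos_le_cos_of_nonneg_of_le_pi (by positivity)
    · rw [div_le_iff₀ (by positivity)]
      push_cast
      have hTA : (T:ℝ) ≤ (A:ℝ)*(T:ℝ) := by nlinarith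
      nlinarith [mul_le_mul_of_nonneg_left hTA hpi.le]
    · rw [div_le_div_iff_of_pos_right (by positivity : (0:ℝ) < (A:ℝ)*(T:ℝ))]
      push_cast
      nlinarith
  · -- partial sums
    intro X hX
    unfold PhiB
    split
    case isTrue hdvd =>
      obtain ⟨q, hq⟩ := hdvd
      have hcos : ∀ k : ℕ, Real.cos ((2*Real.pi*(n:ℝ)/((A:ℝ)*(T:ℝ))) * (k:ℝ)) = 1 := by
        intro k
        have : (2*Real.pi*(n:ℝ)/((A:ℝ)*(T:ℝ))) * (k:ℝ) = ((q*k : ℤ):ℝ) * (2*Real.pi) := by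
          have hn : (n:ℝ) = ((A:ℝ)*(T:ℝ)) * (q:ℝ) := by
            rw [hq]; push_cast; ring
          rw [hn]
          field_simp
          push_cast
          ring
        rw [this]
        exact_mod_cast Real.cos_int_mul_two_pi (q*(k:ℤ))
      have hs : ∑ k ∈ Finset.Icc 1 X, Real.cos ((2*Real.pi*(n:ℝ)/((A:ℝ)*(T:ℝ))) * (k:ℝ)) = (X:ℝ) := by
        simp only [hcos]
        rw [Finset.sum_const, Nat.card_Icc]
        simp
      rw [hs, abs_of_nonneg (by positivity)]
      exact_mod_cast hX
    case isFalse hdvd =>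
      have hsin : Real.sin ((2*Real.pi*(n:ℝ)/((A:ℝ)*(T:ℝ)))/2) ≠ 0 := by
        intro hs
        rw [Real.sin_eq_zero_iff] at hs
        obtain ⟨m, hm⟩ := hs
        apply hdvd
        have h2 : ((A*T:ℕ):ℤ) * m = n := by
          have hAT : ((A:ℝ)*(T:ℝ)) ≠ 0 := by positivity
          have hpi := Real.pi_ne_zero
          have h3 : (m:ℝ) * ((A:ℝ)*(T:ℝ)) = (n:ℝ) := by
            field_simp at hm
            have h4 : (2*Real.pi) * ((m:ℝ) * ((A:ℝ)*(T:ℝ))) = (2*Real.pi) * (n:ℝ) := by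
              linear_combination (2*Real.pi) * hm
            have h5 : (2*Real.pi) ≠ 0 := by positivity
            exact mul_left_cancel₀ h5 h4
          push_cast
          exact_mod_cast (by linarith : ((A:ℝ)*(T:ℝ)) * (m:ℝ) = (n:ℝ))
        exact ⟨m, h2.symm⟩
      have := cos_sum_bound hsin X
      rw [show (2*Real.pi*(n:ℝ)/((A:ℝ)*(T:ℝ)))/2 = Real.pi * (n:ℝ) / ((A:ℝ)*(T:ℝ)) by ring] at this
      exact this

noncomputable def fB (A T : ℕ) (m : ℕ) : ℝ :=
  if m = 0 then ((T/2:ℕ):ℝ) else ((A:ℝ)*(T:ℝ))/2 * (1/(m:ℝ) + 1/((A:ℝ)*(T:ℝ) - (m:ℝ)))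

lemma res_exists_unique (A : ℕ) (hA : 0 < A) (x : ℤ) :
    ∃! r : ℤ, r ∈ Ires A ∧ x % (A:ℤ) = r % (A:ℤ) := by
  have hA' : (0:ℤ) < (A:ℤ) := by exact_mod_cast hA
  set L : ℕ := (A - 1)/2 with hL
  set U : ℕ := A/2 with hU
  have hLU : L + U + 1 = A := by omega
  refine ⟨(x + L) % A - L, ⟨?_, ?_⟩, ?_⟩
  · rw [Ires, Finset.mem_Icc]
    have h1 : 0 ≤ (x + L) % A := Int.emod_nonneg _ (by omega)
    have h2 : (x + L) % A < A := Int.emod_lt_of_pos _ hA'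
    have hLU' : (L:ℤ) + (U:ℤ) + 1 = (A:ℤ) := by exact_mod_cast hLU
    constructor <;> omega
  · have h1 : ((x + L) % A - L) % A = ((x + L) % A % A - L % A) % A := Int.sub_emod _ _ _
    rw [Int.emod_emod_of_dvd _ dvd_rfl, ← Int.sub_emod] at h1
    rw [h1]
    congr 1
    omega
  · rintro r ⟨hr, hrx⟩
    rw [Ires, Finset.mem_Icc] at hr
    have hLU' : (L:ℤ) + (U:ℤ) + 1 = (A:ℤ) := by exact_mod_cast hLU
    have h1 : 0 ≤ (x + L) % A := Int.emod_nonneg _ (by omega)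
    have h2 : (x + L) % A < A := Int.emod_lt_of_pos _ hA'
    -- r + L and (x+L)%A are both in [0, A) and congruent mod A
    have hc : (r + L) % A = ((x + L) % A) % A := by
      rw [Int.emod_emod_of_dvd _ dvd_rfl, Int.add_emod, ← hrx, ← Int.add_emod]
    rw [Int.emod_emod_of_dvd _ dvd_rfl] at hc
    have h3 : (r + L) % A = r + L := Int.emod_eq_of_lt (by omega) (by omega)
    omega

lemma filter_res_singleton (A : ℕ) (hA : 0 < A) (x : ℤ) :
    ∃ r₀ : ℤ, (Ires A).filter (fun r => x % (A:ℤ) = r % (A:ℤ)) = {r₀} ∧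
      x % (A:ℤ) = r₀ % (A:ℤ) := by
  obtain ⟨r₀, ⟨hmem, hmod⟩, huniq⟩ := res_exists_unique A hA x
  refine ⟨r₀, ?_, hmod⟩
  apply Finset.eq_singleton_iff_unique_mem.mpr
  constructor
  · exact Finset.mem_filter.mpr ⟨hmem, hmod⟩
  · intro y hy
    rw [Finset.mem_filter] at hy
    exact huniq y hy

lemma cos_res_eq (A tb : ℕ) (hA : 0 < A) (k r : ℤ) (h : k % (A:ℤ) = r % (A:ℤ)) :
    Real.cos (2 * Real.pi * (r:ℝ) * (tb:ℝ) / (A:ℝ)) =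
    Real.cos (2 * Real.pi * (k:ℝ) * (tb:ℝ) / (A:ℝ)) := by
  have hA' : ((A:ℤ)) ∣ (r - k) := by
    have := Int.emod_eq_emod_iff_emod_sub_eq_zero.mp h.symm
    exact Int.dvd_of_emod_eq_zero this
  obtain ⟨q, hq⟩ := hA'
  have hr : (r:ℝ) = (k:ℝ) + (A:ℝ) * (q:ℝ) := by exact_mod_cast (by linarith [hq] : r = k + (A:ℤ)*q)
  have hA0 : (A:ℝ) ≠ 0 := by positivity
  have harg : 2 * Real.pi * (r:ℝ) * (tb:ℝ) / (A:ℝ)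
      = 2 * Real.pi * (k:ℝ) * (tb:ℝ) / (A:ℝ) + ((q*tb : ℤ):ℝ) * (2*Real.pi) := by
    rw [hr]; push_cast; field_simp
  rw [harg, Real.cos_add_int_mul_two_pi]

lemma two_cos_cos (X Y : ℝ) : 2 * Real.cos X * Real.cos Y = Real.cos (X+Y) + Real.cos (X-Y) := by
  rw [Real.cos_add, Real.cos_sub]; ring

lemma recombine (A T : ℕ) (hA : 0 < A) (hT : 0 < T) (j : ℤ) :
    ∑ r ∈ Ires A, Real.cos (2*Real.pi*(r:ℝ)*((invMod T A):ℝ)/(A:ℝ)) * Sigma1 A T j r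
    = ∑ k ∈ Finset.Icc 1 (T/2),
        (Real.cos (2*Real.pi*(k:ℝ)/((A:ℝ)*(T:ℝ))) - 1) *
          (Real.cos ((2*Real.pi*((((invMod T A : ℕ):ℤ)*T + j*A : ℤ):ℝ)/((A:ℝ)*(T:ℝ))) * (k:ℝ))
           + Real.cos ((2*Real.pi*((((invMod T A : ℕ):ℤ)*T - j*A : ℤ):ℝ)/((A:ℝ)*(T:ℝ))) * (k:ℝ))) := by
  have hA' : (0:ℝ) < (A:ℝ) := by exact_mod_cast hA
  have hT' : (0:ℝ) < (T:ℝ) := by exact_mod_cast hT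
  set tb := invMod T A with htb
  -- step 1: swap sums
  unfold Sigma1
  simp_rw [Finset.sum_filter, Finset.mul_sum]
  rw [Finset.sum_comm]
  apply Finset.sum_congr rfl
  intro k hk
  -- now: ∑ r ∈ Ires A, cos(2πr tb/A) * (2 * if k%A = r%A then G k else 0) = g k * (cosP + cosM)
  have hsing := filter_res_singleton A hA (k:ℤ)
  obtain ⟨r₀, hfil, hmod⟩ := hsing
  have hstep : ∑ r ∈ Ires A, Real.cos (2*Real.pi*(r:ℝ)*(tb:ℝ)/(A:ℝ)) *
      (2 * if (k:ℤ) % (A:ℤ) = r % (A:ℤ) then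
        (Real.cos (2 * Real.pi * (k : ℝ) / ((A : ℝ) * (T : ℝ))) - 1) *
          Real.cos (2 * Real.pi * (j : ℝ) * (k : ℝ) / (T : ℝ)) else 0)
      = Real.cos (2*Real.pi*(k:ℝ)*(tb:ℝ)/(A:ℝ)) *
        (2 * ((Real.cos (2 * Real.pi * (k : ℝ) / ((A : ℝ) * (T : ℝ))) - 1) *
          Real.cos (2 * Real.pi * (j : ℝ) * (k : ℝ) / (T : ℝ)))) := by
    rw [← Finset.sum_filter_add_sum_filter_not (Ires A) (fun r => (k:ℤ) % (A:ℤ) = r % (A:ℤ))]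
    have hz : ∑ r ∈ (Ires A).filter (fun r => ¬ ((k:ℤ) % (A:ℤ) = r % (A:ℤ))),
        Real.cos (2*Real.pi*(r:ℝ)*(tb:ℝ)/(A:ℝ)) *
        (2 * if (k:ℤ) % (A:ℤ) = r % (A:ℤ) then
          (Real.cos (2 * Real.pi * (k : ℝ) / ((A : ℝ) * (T : ℝ))) - 1) *
            Real.cos (2 * Real.pi * (j : ℝ) * (k : ℝ) / (T : ℝ)) else 0) = 0 := by
      apply Finset.sum_eq_zero
      intro r hr
      rw [Finset.mem_filter] at hr
      rw [if_neg hr.2]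
      ring
    rw [hz, add_zero, hfil, Finset.sum_singleton, if_pos hmod,
      cos_res_eq A tb hA (k:ℤ) r₀ hmod]
    norm_cast
  rw [hstep]
  -- step 2: trig identity
  have hX : ∀ Y:ℝ, 2 * (Real.cos (2*Real.pi*(k:ℝ)*(tb:ℝ)/(A:ℝ))) * Real.cos Y
      = Real.cos ((2*Real.pi*(k:ℝ)*(tb:ℝ)/(A:ℝ)) + Y) + Real.cos ((2*Real.pi*(k:ℝ)*(tb:ℝ)/(A:ℝ)) - Y) :=
    fun Y => two_cos_cos _ Y
  have hplus : (2*Real.pi*(k:ℝ)*(tb:ℝ)/(A:ℝ)) + 2 * Real.pi * (j : ℝ) * (k : ℝ) / (T : ℝ)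
      = (2*Real.pi*((((tb:ℕ):ℤ)*T + j*A : ℤ):ℝ)/((A:ℝ)*(T:ℝ))) * (k:ℝ) := by
    push_cast
    field_simp
  have hminus : (2*Real.pi*(k:ℝ)*(tb:ℝ)/(A:ℝ)) - 2 * Real.pi * (j : ℝ) * (k : ℝ) / (T : ℝ)
      = (2*Real.pi*((((tb:ℕ):ℤ)*T - j*A : ℤ):ℝ)/((A:ℝ)*(T:ℝ))) * (k:ℝ) := by
    push_cast
    field_simp
  rw [show Real.cos (2*Real.pi*(k:ℝ)*(tb:ℝ)/(A:ℝ)) *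
        (2 * ((Real.cos (2 * Real.pi * (k : ℝ) / ((A : ℝ) * (T : ℝ))) - 1) *
          Real.cos (2 * Real.pi * (j : ℝ) * (k : ℝ) / (T : ℝ))))
      = (Real.cos (2 * Real.pi * (k : ℝ) / ((A : ℝ) * (T : ℝ))) - 1) *
        (2 * (Real.cos (2*Real.pi*(k:ℝ)*(tb:ℝ)/(A:ℝ))) *
          Real.cos (2 * Real.pi * (j : ℝ) * (k : ℝ) / (T : ℝ))) by ring,
    hX, hplus, hminus]

lemma fB_nonneg (A T : ℕ) (hA : 0 < A) (hT : 0 < T) (m : ℕ) (hm : m < A*T) : 0 ≤ fB A T m := by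
  unfold fB
  split
  · positivity
  · have h1 : (m:ℝ) < (A:ℝ)*(T:ℝ) := by exact_mod_cast hm
    have h0 : (0:ℝ) < m := by
      have : 0 < m := Nat.pos_of_ne_zero (by assumption)
      exact_mod_cast this
    have : (0:ℝ) < (A:ℝ)*(T:ℝ) - m := by linarith
    positivity

lemma abs_sin_add_int_pi (x : ℝ) (q : ℤ) : |Real.sin (x + q*Real.pi)| = |Real.sin x| := by
  rw [Real.sin_add, Real.sin_int_mul_pi, mul_zero, add_zero, abs_mul]
  have h : |Real.cos ((q:ℝ)*Real.pi)| = 1 := by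
    have h1 := Real.sin_sq_add_cos_sq ((q:ℝ)*Real.pi)
    rw [Real.sin_int_mul_pi] at h1
    nlinarith [abs_nonneg (Real.cos ((q:ℝ)*Real.pi)), sq_abs (Real.cos ((q:ℝ)*Real.pi))]
  rw [h, mul_one]

lemma PhiB_le (A T : ℕ) (hA : 0 < A) (hT : 0 < T) (n : ℤ) :
    PhiB A T n ≤ fB A T ((n % ((A*T : ℕ):ℤ)).toNat) := by
  have hAT : 0 < A*T := Nat.mul_pos hA hT
  have hAT' : (0:ℤ) < ((A*T:ℕ):ℤ) := by exact_mod_cast hAT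
  have hATr : (0:ℝ) < (A:ℝ)*(T:ℝ) := by
    have : (0:ℝ) < ((A*T:ℕ):ℝ) := by exact_mod_cast hAT
    push_cast at this; linarith
  set m : ℕ := (n % ((A*T : ℕ):ℤ)).toNat with hm
  have hmod1 : 0 ≤ n % ((A*T : ℕ):ℤ) := Int.emod_nonneg _ (by omega)
  have hmod2 : n % ((A*T : ℕ):ℤ) < ((A*T:ℕ):ℤ) := Int.emod_lt_of_pos _ hAT'
  have hmz : (m:ℤ) = n % ((A*T : ℕ):ℤ) := Int.toNat_of_nonneg hmod1
  have hmlt : m < A*T := by omega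
  by_cases hdvd : ((A*T : ℕ):ℤ) ∣ n
  · have hm0 : m = 0 := by
      have : n % ((A*T : ℕ):ℤ) = 0 := Int.emod_eq_zero_of_dvd hdvd
      omega
    rw [PhiB, if_pos hdvd, fB, hm0, if_pos rfl]
  · have hm0 : m ≠ 0 := by
      intro h0
      apply hdvd
      apply Int.dvd_of_emod_eq_zero
      omega
    rw [PhiB, if_neg hdvd, fB, if_neg hm0]
    -- |sin(πn/(AT))| = |sin(πm/(AT))|
    have hq : n = (m:ℤ) + ((A*T:ℕ):ℤ) * (n / ((A*T:ℕ):ℤ)) := by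
      rw [hmz]; rw [Int.emod_def]; ring
    have hsin_eq : |Real.sin (Real.pi * (n:ℝ) / ((A:ℝ)*(T:ℝ)))|
        = |Real.sin (Real.pi * (m:ℝ) / ((A:ℝ)*(T:ℝ)))| := by
      set q : ℤ := n / ((A*T:ℕ):ℤ)
      have harg : Real.pi * (n:ℝ) / ((A:ℝ)*(T:ℝ))
          = Real.pi * (m:ℝ) / ((A:ℝ)*(T:ℝ)) + (q:ℤ)*Real.pi := by
        have hn : (n:ℝ) = (m:ℝ) + ((A:ℝ)*(T:ℝ)) * (q:ℝ) := by
          have := hq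
          have h2 : (n:ℝ) = ((m:ℤ):ℝ) + (((A*T:ℕ):ℤ):ℝ) * ((q:ℤ):ℝ) := by exact_mod_cast this
          push_cast at h2 ⊢
          linarith
        rw [hn]
        field_simp
      rw [harg, abs_sin_add_int_pi]
    rw [hsin_eq]
    -- lower bound on |sin(πm/(AT))|
    have hm1 : 1 ≤ m := Nat.one_le_iff_ne_zero.mpr hm0
    have hmr : (1:ℝ) ≤ (m:ℝ) := by exact_mod_cast hm1
    have hmltr : (m:ℝ) < (A:ℝ)*(T:ℝ) := by
      have : ((m:ℕ):ℝ) < ((A*T:ℕ):ℝ) := by exact_mod_cast hmlt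
      push_cast at this; linarith
    have hsin_lb : 2 * (min (m:ℝ) ((A:ℝ)*(T:ℝ) - m)) / ((A:ℝ)*(T:ℝ))
        ≤ |Real.sin (Real.pi * (m:ℝ) / ((A:ℝ)*(T:ℝ)))| := by
      have hpi := Real.pi_pos
      rcases le_or_gt (2*(m:ℝ)) ((A:ℝ)*(T:ℝ)) with hc | hc
      · have hx1 : (0:ℝ) ≤ Real.pi * (m:ℝ) / ((A:ℝ)*(T:ℝ)) := by positivity
        have hx2 : Real.pi * (m:ℝ) / ((A:ℝ)*(T:ℝ)) ≤ Real.pi/2 := by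
          rw [div_le_div_iff₀ hATr (by norm_num)]
          nlinarith
        have := Real.mul_le_sin hx1 hx2
        have hmin : min (m:ℝ) ((A:ℝ)*(T:ℝ) - m) = (m:ℝ) := min_eq_left (by linarith)
        rw [hmin]
        calc 2 * (m:ℝ) / ((A:ℝ)*(T:ℝ)) = 2/Real.pi * (Real.pi * (m:ℝ) / ((A:ℝ)*(T:ℝ))) := by
              field_simp
          _ ≤ Real.sin (Real.pi * (m:ℝ) / ((A:ℝ)*(T:ℝ))) := this
          _ ≤ |Real.sin (Real.pi * (m:ℝ) / ((A:ℝ)*(T:ℝ)))| := le_abs_self _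
      · have hs : Real.sin (Real.pi * (m:ℝ) / ((A:ℝ)*(T:ℝ)))
            = Real.sin (Real.pi - Real.pi * (m:ℝ) / ((A:ℝ)*(T:ℝ))) := (Real.sin_pi_sub _).symm
        have harg : Real.pi - Real.pi * (m:ℝ) / ((A:ℝ)*(T:ℝ))
            = Real.pi * ((A:ℝ)*(T:ℝ) - m) / ((A:ℝ)*(T:ℝ)) := by
          field_simp
        have hx1 : (0:ℝ) ≤ Real.pi * ((A:ℝ)*(T:ℝ) - m) / ((A:ℝ)*(T:ℝ)) := by
          have : (0:ℝ) ≤ (A:ℝ)*(T:ℝ) - m := by linarith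
          positivity
        have hx2 : Real.pi * ((A:ℝ)*(T:ℝ) - m) / ((A:ℝ)*(T:ℝ)) ≤ Real.pi/2 := by
          rw [div_le_div_iff₀ hATr (by norm_num)]
          nlinarith
        have hlb := Real.mul_le_sin hx1 hx2
        have hmin : min (m:ℝ) ((A:ℝ)*(T:ℝ) - m) = (A:ℝ)*(T:ℝ) - m := min_eq_right (by linarith)
        rw [hmin, hs, harg]
        calc 2 * ((A:ℝ)*(T:ℝ) - m) / ((A:ℝ)*(T:ℝ))
            = 2/Real.pi * (Real.pi * ((A:ℝ)*(T:ℝ) - m) / ((A:ℝ)*(T:ℝ))) := by field_simp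
          _ ≤ Real.sin (Real.pi * ((A:ℝ)*(T:ℝ) - m) / ((A:ℝ)*(T:ℝ))) := hlb
          _ ≤ |Real.sin (Real.pi * ((A:ℝ)*(T:ℝ) - m) / ((A:ℝ)*(T:ℝ)))| := le_abs_self _
    have hminpos : (0:ℝ) < min (m:ℝ) ((A:ℝ)*(T:ℝ) - m) := by
      apply lt_min (by linarith) (by linarith)
    have hsinpos : (0:ℝ) < |Real.sin (Real.pi * (m:ℝ) / ((A:ℝ)*(T:ℝ)))| := by
      calc (0:ℝ) < 2 * (min (m:ℝ) ((A:ℝ)*(T:ℝ) - m)) / ((A:ℝ)*(T:ℝ)) := by positivity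
        _ ≤ _ := hsin_lb
    rw [div_le_iff₀ hsinpos]
    calc (1:ℝ) = (2 * (min (m:ℝ) ((A:ℝ)*(T:ℝ) - m)) / ((A:ℝ)*(T:ℝ)))
          * (((A:ℝ)*(T:ℝ)) / (2 * (min (m:ℝ) ((A:ℝ)*(T:ℝ) - m)))) := by
          field_simp
      _ ≤ |Real.sin (Real.pi * (m:ℝ) / ((A:ℝ)*(T:ℝ)))|
          * (((A:ℝ)*(T:ℝ))/2 * (1/(m:ℝ) + 1/((A:ℝ)*(T:ℝ) - (m:ℝ)))) := by
          apply mul_le_mul hsin_lb ?_ (by positivity) (abs_nonneg _)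
          rcases min_cases (m:ℝ) ((A:ℝ)*(T:ℝ) - m) with ⟨hmin, _⟩ | ⟨hmin, _⟩ <;> rw [hmin]
          · rw [div_le_iff₀ (by linarith)]
            have h1 : (0:ℝ) < (A:ℝ)*(T:ℝ) - m := by linarith
            have h2 : 1/((A:ℝ)*(T:ℝ) - (m:ℝ)) > 0 := by positivity
            have h3 : ((A:ℝ)*(T:ℝ))/2 * (1/(m:ℝ)) * (2*(m:ℝ)) = (A:ℝ)*(T:ℝ) := by
              field_simp
            have h4 : (0:ℝ) < ((A:ℝ)*(T:ℝ))/2 * (1/((A:ℝ)*(T:ℝ) - (m:ℝ))) * (2*(m:ℝ)) := by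
              positivity
            nlinarith [h3, h4]
          · rw [div_le_iff₀ (by linarith)]
            have h1 : (0:ℝ) < (A:ℝ)*(T:ℝ) - m := by linarith
            have h3 : ((A:ℝ)*(T:ℝ))/2 * (1/((A:ℝ)*(T:ℝ) - (m:ℝ))) * (2*((A:ℝ)*(T:ℝ) - (m:ℝ))) = (A:ℝ)*(T:ℝ) := by
              field_simp
            have h2 : 1/(m:ℝ) > 0 := by positivity
            have h4 : (0:ℝ) < ((A:ℝ)*(T:ℝ))/2 * (1/(m:ℝ)) * (2*((A:ℝ)*(T:ℝ) - (m:ℝ))) := by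
              positivity
            nlinarith [h3, h4]
      _ = _ := by ring

lemma fiber_sum (S : Finset ℤ) (ψ : ℤ → ℕ) (f : ℕ → ℝ) (M' : ℕ)
    (hf : ∀ m, m < M' → 0 ≤ f m)
    (hmaps : ∀ jj ∈ S, ψ jj < M')
    (hfib : ∀ m, (S.filter (fun jj => ψ jj = m)).card ≤ 2) :
    ∑ jj ∈ S, f (ψ jj) ≤ 2 * ∑ m ∈ Finset.range M', f m := by
  classical
  rw [Finset.sum_comp]
  calc ∑ b ∈ S.image ψ, (S.filter (fun jj => ψ jj = b)).card • f b
      ≤ ∑ b ∈ S.image ψ, 2 * f b := by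
        apply Finset.sum_le_sum
        intro b hb
        rw [Finset.mem_image] at hb
        obtain ⟨jj, hj, rfl⟩ := hb
        rw [nsmul_eq_mul]
        exact mul_le_mul_of_nonneg_right (by exact_mod_cast hfib (ψ jj))
          (hf _ (hmaps jj hj))
    _ ≤ ∑ b ∈ Finset.range M', 2 * f b := by
        apply Finset.sum_le_sum_of_subset_of_nonneg
        · intro b hb
          rw [Finset.mem_image] at hb
          obtain ⟨jj, hj, rfl⟩ := hb
          exact Finset.mem_range.mpr (hmaps jj hj)
        · intro b hb _
          exact mul_nonneg (by norm_num) (hf b (Finset.mem_range.mp hb))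
    _ = 2 * ∑ m ∈ Finset.range M', f m := by rw [Finset.mul_sum]

lemma fiber_card (A T : ℕ) (hA : 0 < A) (hT : 0 < T) (φ : ℤ → ℤ)
    (hφ : ∀ j1 j2 : ℤ, ((A*T:ℕ):ℤ) ∣ (φ j1 - φ j2) → (T:ℤ) ∣ (j1 - j2)) (m : ℕ) :
    ((IresSym T).filter (fun j => ((φ j) % ((A*T:ℕ):ℤ)).toNat = m)).card ≤ 2 := by
  by_contra hcon
  push_neg at hcon
  rw [Finset.two_lt_card_iff] at hcon
  obtain ⟨j1, j2, j3, h1, h2, h3, h12, h13, h23⟩ := hcon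
  have hAT' : (0:ℤ) < ((A*T:ℕ):ℤ) := by exact_mod_cast Nat.mul_pos hA hT
  have hT2 : ((T/2:ℕ):ℤ) * 2 ≤ (T:ℤ) := by exact_mod_cast Nat.div_mul_le_self T 2
  have hTpos : (0:ℤ) < (T:ℤ) := by exact_mod_cast hT
  have key : ∀ x y : ℤ, x ∈ (IresSym T).filter (fun j => ((φ j) % ((A*T:ℕ):ℤ)).toNat = m) →
      y ∈ (IresSym T).filter (fun j => ((φ j) % ((A*T:ℕ):ℤ)).toNat = m) →
      x ≠ y → x - y = (T:ℤ) ∨ x - y = -(T:ℤ) := by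
    intro x y hx hy hxy
    rw [Finset.mem_filter, IresSym, Finset.mem_Icc] at hx hy
    have hmodx : 0 ≤ (φ x) % ((A*T:ℕ):ℤ) := Int.emod_nonneg _ (by omega)
    have hmody : 0 ≤ (φ y) % ((A*T:ℕ):ℤ) := Int.emod_nonneg _ (by omega)
    have heq : (φ x) % ((A*T:ℕ):ℤ) = (φ y) % ((A*T:ℕ):ℤ) := by
      have := hx.2
      have := hy.2
      omega
    have hdvd : ((A*T:ℕ):ℤ) ∣ (φ x - φ y) := by
      rw [Int.emod_eq_emod_iff_emod_sub_eq_zero] at heq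
      exact Int.dvd_of_emod_eq_zero heq
    obtain ⟨q, hq⟩ := hφ x y hdvd
    have hb1 := hx.1
    have hb2 := hy.1
    have habs : |x - y| ≤ (T:ℤ) := by
      rw [abs_le]; omega
    have h5 : (T:ℤ) * |q| = |x - y| := by rw [hq, abs_mul, abs_of_pos hTpos]
    have hq1 : |q| ≤ 1 := by
      by_contra hq2
      push_neg at hq2
      have h6 : 2 ≤ |q| := by omega
      have h7 : 2 * (T:ℤ) ≤ (T:ℤ) * |q| := by nlinarith
      linarith [habs, h5.symm.le]
    have hxy0 : x - y ≠ 0 := fun h => hxy (by omega)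
    have hq0 : q ≠ 0 := fun h => hxy0 (by rw [hq, h, mul_zero])
    obtain ⟨hql, hqr⟩ := abs_le.mp hq1
    interval_cases q
    · right; omega
    · exact absurd rfl hq0
    · left; omega
  have k12 := key j1 j2 h1 h2 h12
  have k13 := key j1 j3 h1 h3 h13
  have k23 := key j2 j3 h2 h3 h23
  have hTpos2 : (0:ℤ) < (T:ℤ) := by exact_mod_cast hT
  rcases k12 with h|h <;> rcases k13 with h'|h' <;> rcases k23 with h''|h'' <;> omega

lemma sum_inv_le (n : ℕ) : ∑ m ∈ Finset.Icc 1 n, (1/(m:ℝ)) ≤ 1 + Real.log n := by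
  have h := harmonic_le_one_add_log n
  have heq : ((harmonic n : ℚ) : ℝ) = ∑ m ∈ Finset.Icc 1 n, (1/(m:ℝ)) := by
    rw [harmonic_eq_sum_Icc]
    push_cast
    simp [one_div]
  rw [← heq]
  exact_mod_cast h

lemma sum_fB_le (A T : ℕ) (hA : 0 < A) (hT : 0 < T) :
    ∑ m ∈ Finset.range (A*T), fB A T m
      ≤ (T:ℝ) + ((A:ℝ)*(T:ℝ)) * (1 + Real.log ((A:ℝ)*(T:ℝ))) := by
  have hAT : 0 < A*T := Nat.mul_pos hA hT
  have hATr : (0:ℝ) < (A:ℝ)*(T:ℝ) := by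
    have : (0:ℝ) < ((A*T:ℕ):ℝ) := by exact_mod_cast hAT
    push_cast at this; linarith
  have hsplit : Finset.range (A*T) = insert 0 (Finset.Icc 1 (A*T - 1)) := by
    ext x
    simp only [Finset.mem_range, Finset.mem_insert, Finset.mem_Icc]
    omega
  rw [hsplit, Finset.sum_insert (by simp)]
  have h0 : fB A T 0 = ((T/2:ℕ):ℝ) := by rw [fB, if_pos rfl]
  have h0le : fB A T 0 ≤ (T:ℝ) := by
    rw [h0]
    have : (T/2:ℕ) ≤ T := Nat.div_le_self T 2
    exact_mod_cast this
  have hmain : ∑ m ∈ Finset.Icc 1 (A*T-1), fB A T m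
      ≤ ((A:ℝ)*(T:ℝ)) * (1 + Real.log ((A:ℝ)*(T:ℝ))) := by
    have hfm : ∀ m ∈ Finset.Icc 1 (A*T-1), fB A T m
        = ((A:ℝ)*(T:ℝ))/2 * (1/(m:ℝ)) + ((A:ℝ)*(T:ℝ))/2 * (1/((A:ℝ)*(T:ℝ) - (m:ℝ))) := by
      intro m hm
      rw [Finset.mem_Icc] at hm
      rw [fB, if_neg (by omega)]
      ring
    rw [Finset.sum_congr rfl hfm, Finset.sum_add_distrib, ← Finset.mul_sum, ← Finset.mul_sum]
    have hrefl : ∑ m ∈ Finset.Icc 1 (A*T-1), 1/((A:ℝ)*(T:ℝ) - (m:ℝ))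
        = ∑ m ∈ Finset.Icc 1 (A*T-1), 1/(m:ℝ) := by
      apply Finset.sum_nbij' (fun m => A*T - m) (fun m => A*T - m)
      · intro m hm; rw [Finset.mem_Icc] at hm ⊢; omega
      · intro m hm; rw [Finset.mem_Icc] at hm ⊢; omega
      · intro m hm; rw [Finset.mem_Icc] at hm; omega
      · intro m hm; rw [Finset.mem_Icc] at hm; omega
      · intro m hm
        rw [Finset.mem_Icc] at hm
        congr 1
        have h1 : ((A*T - m : ℕ):ℝ) = ((A*T:ℕ):ℝ) - (m:ℝ) := by
          have : m ≤ A*T := by omega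
          push_cast [this]
          ring
        rw [h1]
        push_cast
        ring
    rw [hrefl]
    have hharm : ∑ m ∈ Finset.Icc 1 (A*T-1), (1/(m:ℝ)) ≤ 1 + Real.log ((A:ℝ)*(T:ℝ)) := by
      calc ∑ m ∈ Finset.Icc 1 (A*T-1), (1/(m:ℝ)) ≤ 1 + Real.log ((A*T-1:ℕ):ℝ) := sum_inv_le _
        _ ≤ 1 + Real.log ((A:ℝ)*(T:ℝ)) := by
          apply add_le_add_right
          rcases Nat.eq_zero_or_pos (A*T-1) with h|h
          · rw [h]
            simp only [Nat.cast_zero, Real.log_zero]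
            apply Real.log_nonneg
            have : (1:ℝ) ≤ ((A*T:ℕ):ℝ) := by exact_mod_cast hAT
            push_cast at this; linarith
          · apply Real.log_le_log (by exact_mod_cast h)
            have : ((A*T-1:ℕ):ℝ) ≤ ((A*T:ℕ):ℝ) := by exact_mod_cast Nat.sub_le _ _
            push_cast at this ⊢
            linarith
    have hpos : 0 ≤ ∑ m ∈ Finset.Icc 1 (A*T-1), (1/(m:ℝ)) := by
      apply Finset.sum_nonneg; intro m _; positivity
    calc ((A:ℝ)*(T:ℝ))/2 * (∑ m ∈ Finset.Icc 1 (A*T-1), 1/(m:ℝ))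
          + ((A:ℝ)*(T:ℝ))/2 * (∑ m ∈ Finset.Icc 1 (A*T-1), 1/(m:ℝ))
        = ((A:ℝ)*(T:ℝ)) * (∑ m ∈ Finset.Icc 1 (A*T-1), 1/(m:ℝ)) := by ring
      _ ≤ ((A:ℝ)*(T:ℝ)) * (1 + Real.log ((A:ℝ)*(T:ℝ))) := by
          exact mul_le_mul_of_nonneg_left hharm (le_of_lt hATr)
  linarith

lemma master (A T : ℕ) (hA : 0 < A) (hT : 0 < T) :
    (1/(T:ℝ)) * ∑ j ∈ IresSym T,
      |∑ r ∈ Ires A, Real.cos (2 * Real.pi * (r : ℝ) * (invMod T A : ℝ) / (A : ℝ)) * Sigma1 A T j r|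
    ≤ 100 * (1 + Real.log ((A:ℝ)*(T:ℝ))) / (A:ℝ) := by
  have hA' : (0:ℝ) < (A:ℝ) := by exact_mod_cast hA
  have hT' : (0:ℝ) < (T:ℝ) := by exact_mod_cast hT
  have hA1 : (1:ℝ) ≤ (A:ℝ) := by exact_mod_cast hA
  have hAT : 0 < A*T := Nat.mul_pos hA hT
  have hAT' : (0:ℤ) < ((A*T:ℕ):ℤ) := by exact_mod_cast hAT
  set tb : ℕ := invMod T A with htb
  set H : ℝ := Real.pi^2/(2*(A:ℝ)^2) with hH
  have hHpos : 0 < H := by rw [hH]; positivity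
  set L : ℝ := Real.log ((A:ℝ)*(T:ℝ)) with hLdef
  have hL : 0 ≤ L := by
    rw [hLdef]
    apply Real.log_nonneg
    have hT1 : (1:ℝ) ≤ (T:ℝ) := by exact_mod_cast hT
    nlinarith [hA1, hT1]
  set SF : ℝ := ∑ m ∈ Finset.range (A*T), fB A T m with hSF
  have hSFpos : 0 ≤ SF := Finset.sum_nonneg (fun m hm => fB_nonneg A T hA hT m (Finset.mem_range.mp hm))
  -- per-j bound
  have hTj : ∀ j ∈ IresSym T,
      |∑ r ∈ Ires A, Real.cos (2 * Real.pi * (r : ℝ) * (tb : ℝ) / (A : ℝ)) * Sigma1 A T j r|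
      ≤ 2*H*(PhiB A T ((tb:ℤ)*T + j*A)) + 2*H*(PhiB A T ((tb:ℤ)*T - j*A)) := by
    intro j _
    rw [recombine A T hA hT j]
    simp_rw [mul_add, Finset.sum_add_distrib]
    calc _ ≤ |∑ k ∈ Finset.Icc 1 (T/2),
          (Real.cos (2*Real.pi*(k:ℝ)/((A:ℝ)*(T:ℝ))) - 1) *
            Real.cos ((2*Real.pi*((((tb:ℕ):ℤ)*T + j*A : ℤ):ℝ)/((A:ℝ)*(T:ℝ))) * (k:ℝ))|
        + |∑ k ∈ Finset.Icc 1 (T/2),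
          (Real.cos (2*Real.pi*(k:ℝ)/((A:ℝ)*(T:ℝ))) - 1) *
            Real.cos ((2*Real.pi*((((tb:ℕ):ℤ)*T - j*A : ℤ):ℝ)/((A:ℝ)*(T:ℝ))) * (k:ℝ))| :=
          abs_add_le _ _
      _ ≤ _ := add_le_add (gsum_bound A T hA hT _) (gsum_bound A T hA hT _)
  -- sum the PhiB's
  have hsum_p : ∑ j ∈ IresSym T, PhiB A T ((tb:ℤ)*T + j*A) ≤ 2*SF := by
    calc ∑ j ∈ IresSym T, PhiB A T ((tb:ℤ)*T + j*A)
        ≤ ∑ j ∈ IresSym T, fB A T ((((tb:ℤ)*T + j*A) % ((A*T:ℕ):ℤ)).toNat) :=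
          Finset.sum_le_sum (fun j _ => PhiB_le A T hA hT _)
      _ ≤ 2*SF := by
          apply fiber_sum _ _ _ _ (fun m hm => fB_nonneg A T hA hT m hm)
          · intro jj _
            have h1 : 0 ≤ ((tb:ℤ)*T + jj*A) % ((A*T:ℕ):ℤ) := Int.emod_nonneg _ (by omega)
            have h2 : ((tb:ℤ)*T + jj*A) % ((A*T:ℕ):ℤ) < ((A*T:ℕ):ℤ) := Int.emod_lt_of_pos _ hAT'
            omega
          · intro m
            apply fiber_card A T hA hT (fun j => (tb:ℤ)*T + j*A) ?_ m
            intro j1 j2 hdvd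
            have heq : ((tb:ℤ)*T + j1*A) - ((tb:ℤ)*T + j2*A) = (A:ℤ)*(j1 - j2) := by ring
            rw [heq] at hdvd
            have hdvd2 : (A:ℤ)*(T:ℤ) ∣ (A:ℤ)*(j1-j2) := by
              have : ((A*T:ℕ):ℤ) = (A:ℤ)*(T:ℤ) := by push_cast; ring
              rwa [this] at hdvd
            exact (mul_dvd_mul_iff_left (by exact_mod_cast hA.ne' : (A:ℤ) ≠ 0)).mp hdvd2
  have hsum_m : ∑ j ∈ IresSym T, PhiB A T ((tb:ℤ)*T - j*A) ≤ 2*SF := by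
    calc ∑ j ∈ IresSym T, PhiB A T ((tb:ℤ)*T - j*A)
        ≤ ∑ j ∈ IresSym T, fB A T ((((tb:ℤ)*T - j*A) % ((A*T:ℕ):ℤ)).toNat) :=
          Finset.sum_le_sum (fun j _ => PhiB_le A T hA hT _)
      _ ≤ 2*SF := by
          apply fiber_sum _ _ _ _ (fun m hm => fB_nonneg A T hA hT m hm)
          · intro jj _
            have h1 : 0 ≤ ((tb:ℤ)*T - jj*A) % ((A*T:ℕ):ℤ) := Int.emod_nonneg _ (by omega)
            have h2 : ((tb:ℤ)*T - jj*A) % ((A*T:ℕ):ℤ) < ((A*T:ℕ):ℤ) := Int.emod_lt_of_pos _ hAT'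
            omega
          · intro m
            apply fiber_card A T hA hT (fun j => (tb:ℤ)*T - j*A) ?_ m
            intro j1 j2 hdvd
            have heq : ((tb:ℤ)*T - j1*A) - ((tb:ℤ)*T - j2*A) = (A:ℤ)*(j2 - j1) := by ring
            rw [heq] at hdvd
            have hdvd2 : (A:ℤ)*(T:ℤ) ∣ (A:ℤ)*(j2-j1) := by
              have : ((A*T:ℕ):ℤ) = (A:ℤ)*(T:ℤ) := by push_cast; ring
              rwa [this] at hdvd
            have h9 := (mul_dvd_mul_iff_left (by exact_mod_cast hA.ne' : (A:ℤ) ≠ 0)).mp hdvd2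
            have h10 := dvd_neg.mpr h9
            rwa [neg_sub] at h10
  have htotal : ∑ j ∈ IresSym T,
      |∑ r ∈ Ires A, Real.cos (2 * Real.pi * (r : ℝ) * (tb : ℝ) / (A : ℝ)) * Sigma1 A T j r|
      ≤ 8*H*SF := by
    calc ∑ j ∈ IresSym T,
        |∑ r ∈ Ires A, Real.cos (2 * Real.pi * (r : ℝ) * (tb : ℝ) / (A : ℝ)) * Sigma1 A T j r|
        ≤ ∑ j ∈ IresSym T,
          (2*H*(PhiB A T ((tb:ℤ)*T + j*A)) + 2*H*(PhiB A T ((tb:ℤ)*T - j*A))) :=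
          Finset.sum_le_sum hTj
      _ = 2*H*(∑ j ∈ IresSym T, PhiB A T ((tb:ℤ)*T + j*A))
          + 2*H*(∑ j ∈ IresSym T, PhiB A T ((tb:ℤ)*T - j*A)) := by
          rw [Finset.sum_add_distrib, Finset.mul_sum, Finset.mul_sum]
      _ ≤ 2*H*(2*SF) + 2*H*(2*SF) := by
          apply add_le_add <;> exact mul_le_mul_of_nonneg_left (by assumption) (by positivity)
      _ = 8*H*SF := by ring
  have hSFle := sum_fB_le A T hA hT
  have hpi2 : Real.pi^2 ≤ 10 := by nlinarith [Real.pi_lt_d2, Real.pi_pos]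
  calc (1/(T:ℝ)) * ∑ j ∈ IresSym T,
        |∑ r ∈ Ires A, Real.cos (2 * Real.pi * (r : ℝ) * (tb : ℝ) / (A : ℝ)) * Sigma1 A T j r|
      ≤ (1/(T:ℝ)) * (8*H*((T:ℝ) + ((A:ℝ)*(T:ℝ)) * (1 + L))) := by
        apply mul_le_mul_of_nonneg_left ?_ (by positivity)
        calc _ ≤ 8*H*SF := htotal
          _ ≤ _ := mul_le_mul_of_nonneg_left hSFle (by positivity)
    _ = 8*H + 8*H*(A:ℝ)*(1+L) := by field_simp
    _ ≤ 40/(A:ℝ)^2 + 40/(A:ℝ)*(1+L) := by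
        have h1 : 8*H ≤ 40/(A:ℝ)^2 := by
          rw [hH, show 8*(Real.pi^2/(2*(A:ℝ)^2)) = 4*Real.pi^2/(A:ℝ)^2 by ring,
            div_le_div_iff_of_pos_right (by positivity : (0:ℝ) < (A:ℝ)^2)]
          nlinarith
        have h2 : 8*H*(A:ℝ) ≤ 40/(A:ℝ) := by
          rw [hH, show 8*(Real.pi^2/(2*(A:ℝ)^2))*(A:ℝ) = 4*Real.pi^2/(A:ℝ) by field_simp; ring,
            div_le_div_iff_of_pos_right hA']
          nlinarith
        nlinarith [h1, h2, hL, mul_le_mul_of_nonneg_right h2 (by linarith : (0:ℝ) ≤ 1 + L)]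
    _ ≤ 100 * (1 + L) / (A:ℝ) := by
        have e1 : 40/(A:ℝ)^2 ≤ 40/(A:ℝ) := by
          rw [div_le_div_iff₀ (by positivity) hA']
          nlinarith
        have e2 : 40/(A:ℝ) + 40/(A:ℝ)*(1+L) = (40 + 40*(1+L))/(A:ℝ) := by ring
        have e3 : (40 + 40*(1+L))/(A:ℝ) ≤ 100 * (1 + L) / (A:ℝ) := by
          rw [div_le_div_iff_of_pos_right hA']
          linarith
        linarith


theorem statement2 (a t : ℕ → ℕ)
    (hapos : ∀ N, 0 < a N) (htpos : ∀ N, 0 < t N)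
    (hcop : ∀ N, Nat.Coprime (a N) (t N))
    (haN : (fun N => (a N : ℝ)) =O[atTop] (fun N => (N : ℝ)))
    (htN : (fun N => (t N : ℝ)) =O[atTop] (fun N => (N : ℝ)))
    (hao : (fun N => (a N : ℝ)) =o[atTop] (fun N => (t N : ℝ)))
    (ε : ℝ) (hε : 0 < ε) :
    (fun N => (1 / (t N : ℝ)) * ∑ j ∈ IresSym (t N),
        |∑ r ∈ Ires (a N),
          Real.cos (2 * Real.pi * (r : ℝ) * (invMod (t N) (a N) : ℝ) / (a N : ℝ)) *
            Sigma1 (a N) (t N) j r|)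
      =O[atTop] (fun N => (N : ℝ) ^ ε / (a N : ℝ)) := by
  obtain ⟨c₁, hc₁⟩ := Asymptotics.isBigO_iff.mp haN
  obtain ⟨c₂, hc₂⟩ := Asymptotics.isBigO_iff.mp htN
  set C : ℝ := max 1 (max c₁ c₂) with hC
  have hC1 : (1:ℝ) ≤ C := le_max_left _ _
  have hlogC : 0 ≤ Real.log C := Real.log_nonneg hC1
  -- eventual bounds
  have hev_a : ∀ᶠ N : ℕ in atTop, (a N : ℝ) ≤ C * N := by
    filter_upwards [hc₁] with N hN
    have h1 : |(a N : ℝ)| ≤ c₁ * |(N:ℝ)| := by simpa [Real.norm_eq_abs] using hN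
    have h2 : (a N : ℝ) ≤ c₁ * N := by
      rw [abs_of_nonneg (by positivity), abs_of_nonneg (by positivity)] at h1
      exact h1
    have h3 : c₁ * (N:ℝ) ≤ C * N := by
      apply mul_le_mul_of_nonneg_right _ (by positivity)
      calc c₁ ≤ max c₁ c₂ := le_max_left _ _
        _ ≤ C := le_max_right _ _
    linarith
  have hev_t : ∀ᶠ N : ℕ in atTop, (t N : ℝ) ≤ C * N := by
    filter_upwards [hc₂] with N hN
    have h1 : |(t N : ℝ)| ≤ c₂ * |(N:ℝ)| := by simpa [Real.norm_eq_abs] using hN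
    have h2 : (t N : ℝ) ≤ c₂ * N := by
      rw [abs_of_nonneg (by positivity), abs_of_nonneg (by positivity)] at h1
      exact h1
    have h3 : c₂ * (N:ℝ) ≤ C * N := by
      apply mul_le_mul_of_nonneg_right _ (by positivity)
      calc c₂ ≤ max c₁ c₂ := le_max_right _ _
        _ ≤ C := le_max_right _ _
    linarith
  have hev_log : ∀ᶠ N : ℕ in atTop, Real.log N ≤ (N:ℝ) ^ ε := by
    have h1 : (fun x : ℝ => Real.log x) =o[atTop] (fun x : ℝ => x ^ ε) :=
      isLittleO_log_rpow_atTop hε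
    have h2 := h1.comp_tendsto
      (tendsto_natCast_atTop_atTop : Tendsto (fun n : ℕ => (n:ℝ)) atTop atTop)
    have h3 := (h2.bound (by norm_num : (0:ℝ) < 1))
    filter_upwards [h3, eventually_ge_atTop 1] with N hN hN1
    have hN1' : (1:ℝ) ≤ (N:ℝ) := by exact_mod_cast hN1
    simp only [Function.comp, Real.norm_eq_abs, one_mul] at hN
    calc Real.log N ≤ |Real.log N| := le_abs_self _
      _ ≤ |(N:ℝ) ^ ε| := hN
      _ = (N:ℝ) ^ ε := abs_of_nonneg (Real.rpow_nonneg (by positivity) _)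
  have hev_rpow : ∀ᶠ N : ℕ in atTop, (1:ℝ) ≤ (N:ℝ) ^ ε := by
    filter_upwards [eventually_ge_atTop 1] with N hN1
    have hN1' : (1:ℝ) ≤ (N:ℝ) := by exact_mod_cast hN1
    calc (1:ℝ) = (1:ℝ) ^ ε := (Real.one_rpow ε).symm
      _ ≤ (N:ℝ) ^ ε := Real.rpow_le_rpow (by norm_num) hN1' (le_of_lt hε)
  rw [Asymptotics.isBigO_iff]
  refine ⟨100 * (3 + 2*Real.log C), ?_⟩
  filter_upwards [hev_a, hev_t, hev_log, hev_rpow, eventually_ge_atTop 1]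
    with N hNa hNt hNlog hNrpow hN1
  have hN1' : (1:ℝ) ≤ (N:ℝ) := by exact_mod_cast hN1
  have hA := hapos N
  have hT := htpos N
  have hA' : (0:ℝ) < (a N:ℝ) := by exact_mod_cast hA
  have hT' : (0:ℝ) < (t N:ℝ) := by exact_mod_cast hT
  have hmaster := master (a N) (t N) hA hT
  -- log bound
  have hCN : (0:ℝ) < C * N := by positivity
  have hlog_at : Real.log ((a N:ℝ)*(t N:ℝ)) ≤ 2*Real.log C + 2*Real.log N := by
    rw [Real.log_mul (by positivity) (by positivity)]
    have l1 : Real.log (a N:ℝ) ≤ Real.log C + Real.log N := by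
      calc Real.log (a N:ℝ) ≤ Real.log (C * N) := Real.log_le_log hA' hNa
        _ = Real.log C + Real.log N := Real.log_mul (by positivity) (by positivity)
    have l2 : Real.log (t N:ℝ) ≤ Real.log C + Real.log N := by
      calc Real.log (t N:ℝ) ≤ Real.log (C * N) := Real.log_le_log hT' hNt
        _ = Real.log C + Real.log N := Real.log_mul (by positivity) (by positivity)
    linarith
  have hfinal : 1 + Real.log ((a N:ℝ)*(t N:ℝ)) ≤ (3 + 2*Real.log C) * (N:ℝ)^ε := by
    have : 1 + Real.log ((a N:ℝ)*(t N:ℝ)) ≤ 1 + 2*Real.log C + 2*Real.log N := by linarith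
    calc 1 + Real.log ((a N:ℝ)*(t N:ℝ)) ≤ 1 + 2*Real.log C + 2*Real.log N := this
      _ ≤ (1 + 2*Real.log C) * (N:ℝ)^ε + 2*(N:ℝ)^ε := by
          have e1 : 1 + 2*Real.log C ≤ (1 + 2*Real.log C) * (N:ℝ)^ε := by
            nlinarith [hNrpow, hlogC]
          nlinarith [hNlog]
      _ = (3 + 2*Real.log C) * (N:ℝ)^ε := by ring
  -- conclude
  have hLHS_nonneg : 0 ≤ (1 / (t N : ℝ)) * ∑ j ∈ IresSym (t N),
      |∑ r ∈ Ires (a N),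
        Real.cos (2 * Real.pi * (r : ℝ) * (invMod (t N) (a N) : ℝ) / (a N : ℝ)) *
          Sigma1 (a N) (t N) j r| := by
    apply mul_nonneg (by positivity)
    apply Finset.sum_nonneg
    intro j _
    exact abs_nonneg _
  rw [Real.norm_eq_abs, abs_of_nonneg hLHS_nonneg, Real.norm_eq_abs]
  have hrhs_pos : (0:ℝ) ≤ (N:ℝ)^ε / (a N:ℝ) := by positivity
  rw [abs_of_nonneg hrhs_pos]
  calc (1 / (t N : ℝ)) * ∑ j ∈ IresSym (t N),
        |∑ r ∈ Ires (a N),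
          Real.cos (2 * Real.pi * (r : ℝ) * (invMod (t N) (a N) : ℝ) / (a N : ℝ)) *
            Sigma1 (a N) (t N) j r|
      ≤ 100 * (1 + Real.log ((a N:ℝ)*(t N:ℝ))) / (a N:ℝ) := hmaster
    _ ≤ 100 * ((3 + 2*Real.log C) * (N:ℝ)^ε) / (a N:ℝ) := by
        rw [div_le_div_iff_of_pos_right hA']
        nlinarith [hfinal]
    _ = 100 * (3 + 2*Real.log C) * ((N:ℝ)^ε / (a N:ℝ)) := by ring
end
end

section
/- Let a = a(N), t = t(N) be positive integers with (a,t) = 1, a ≪ N, t ≪ N, and a = o(t) as N → ∞. Then Σ_{0≤|r|≤a/2} sin(2πr·t̄/a) · Σ₂(0,r) ≪ 1, with an absolute implied constant. -/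
open Finset Filter Asymptotics

noncomputable section

/- ### Auxiliary lemmas -/

lemma sum_sin_bound (θ : ℝ) (h : Real.sin (θ/2) ≠ 0) (K : ℕ) :
    |∑ k ∈ Finset.Icc 1 K, Real.sin ((k:ℝ) * θ)| ≤ 1 / |Real.sin (θ/2)| := by
  set u : ℕ → ℝ := fun i => Real.cos (((i:ℝ) + 1/2) * θ) with hu
  have key : 2 * Real.sin (θ/2) * ∑ k ∈ Finset.Icc 1 K, Real.sin ((k:ℝ) * θ)
      = u 0 - u K := by
    rw [Finset.mul_sum, show Finset.Icc 1 K = Finset.Ico 1 (K+1) by rfl,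
      Finset.sum_Ico_eq_sum_range]
    simp only [Nat.add_sub_cancel]
    rw [← Finset.sum_range_sub' u K]
    apply Finset.sum_congr rfl
    intro i _
    simp only [hu]
    rw [Real.cos_sub_cos]
    push_cast
    ring_nf
    rw [show θ * (-1/2) = -(θ*(1/2)) by ring, Real.sin_neg]
    ring
  have h2 : |2 * Real.sin (θ/2)| * |∑ k ∈ Finset.Icc 1 K, Real.sin ((k:ℝ) * θ)| ≤ 2 := by
    rw [← abs_mul, key]
    calc |u 0 - u K| ≤ |u 0| + |u K| := abs_sub _ _
      _ ≤ 1 + 1 := by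
          gcongr <;> exact Real.abs_cos_le_one _
      _ = 2 := by norm_num
  have hpos : 0 < |Real.sin (θ/2)| := abs_pos.mpr h
  rw [abs_mul, abs_two] at h2
  rw [le_div_iff₀ hpos]
  nlinarith [abs_nonneg (∑ k ∈ Finset.Icc 1 K, Real.sin ((k:ℝ) * θ))]

lemma sin_low_aux (a d : ℕ) (ha : 0 < a) (hd1 : 1 ≤ d) (hd2 : 2*d ≤ a) :
    2 / (a:ℝ) ≤ Real.sin (Real.pi * d / a) := by
  have haR : (0:ℝ) < a := by exact_mod_cast ha
  have hx0 : (0:ℝ) ≤ Real.pi * d / a := by positivity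
  have hx1 : Real.pi * d / a ≤ Real.pi / 2 := by
    rw [div_le_div_iff₀ haR two_pos]
    have : (2*d : ℝ) ≤ a := by exact_mod_cast hd2
    nlinarith [Real.pi_pos]
  have := Real.mul_le_sin hx0 hx1
  have h2 : 2 / Real.pi * (Real.pi * d / a) = 2 * d / a := by
    field_simp
  have hd1R : (1:ℝ) ≤ d := by exact_mod_cast hd1
  calc 2/(a:ℝ) ≤ 2 * (d:ℝ) / a := by gcongr; nlinarith
    _ = 2 / Real.pi * (Real.pi * d / a) := h2.symm
    _ ≤ _ := this

lemma sin_freq_lower (a c : ℕ) (ha : 2 ≤ a) (hc : ¬ (a ∣ c)) :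
    2 / (a:ℝ) ≤ |Real.sin (Real.pi * c / a)| := by
  have ha0 : 0 < a := by omega
  have haR : (0:ℝ) < a := by exact_mod_cast ha0
  set c' := c % a with hc'
  have hc'1 : 1 ≤ c' := by
    rcases Nat.eq_zero_or_pos c' with h | h
    · exact absurd (Nat.dvd_of_mod_eq_zero h) hc
    · exact h
  have hc'2 : c' < a := Nat.mod_lt _ ha0
  have hsplit : (c:ℝ) = c' + a * ((c / a : ℕ) : ℝ) := by
    exact_mod_cast (Nat.mod_add_div c a).symm
  have harg : Real.pi * c / a = Real.pi * c' / a + (((c/a : ℕ) : ℤ) : ℝ) * Real.pi := by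
    rw [Int.cast_natCast, hsplit]; field_simp
  have habs : |Real.sin (Real.pi * c / a)| = |Real.sin (Real.pi * c' / a)| := by
    rw [harg, show Real.pi * c' / a + (((c/a : ℕ) : ℤ) : ℝ) * Real.pi
        = Real.pi * c' / a - (((-((c/a : ℕ) : ℤ)) : ℤ) : ℝ) * Real.pi by
          rw [Int.cast_neg]; ring,
      Real.sin_sub_int_mul_pi]
    rw [abs_mul]
    have hz : ∀ z : ℤ, |(-1:ℝ) ^ z| = 1 := by
      intro z
      rcases Int.even_or_odd z with h | h
      · rw [h.neg_one_zpow]; norm_num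
      · rw [h.neg_one_zpow]; norm_num
    rw [hz, one_mul]
  rw [habs]
  rcases le_or_gt (2 * c') a with h | h
  · have := sin_low_aux a c' ha0 hc'1 h
    calc 2/(a:ℝ) ≤ Real.sin (Real.pi * c' / a) := this
      _ ≤ _ := le_abs_self _
  · have hd1 : 1 ≤ a - c' := by omega
    have hd2 : 2 * (a - c') ≤ a := by omega
    have := sin_low_aux a (a - c') ha0 hd1 hd2
    have heq : Real.sin (Real.pi * (a - c' : ℕ) / a) = Real.sin (Real.pi * c' / a) := by
      have : (((a - c' : ℕ)) : ℝ) = a - c' := by push_cast [Nat.cast_sub (le_of_lt hc'2)]; ring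
      rw [this, show Real.pi * ((a:ℝ) - c') / a = Real.pi - Real.pi * c' / a by field_simp,
        Real.sin_pi_sub]
    rw [heq] at this
    calc 2/(a:ℝ) ≤ Real.sin (Real.pi * c' / a) := this
      _ ≤ _ := le_abs_self _

lemma abel_aux (f g : ℕ → ℝ) (M : ℝ) (n : ℕ)
    (hmono : ∀ k, 1 ≤ k → k + 1 ≤ n → f k ≤ f (k+1))
    (hS : ∀ K, K ≤ n → |∑ k ∈ Finset.Icc 1 K, g k| ≤ M) :
    ∀ m, 1 ≤ m → m ≤ n →
      |∑ k ∈ Finset.Icc 1 m, f k * g k - f m * ∑ k ∈ Finset.Icc 1 m, g k|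
        ≤ M * (f m - f 1) := by
  intro m hm
  induction m, hm using Nat.le_induction with
  | base =>
    intro _
    simp
  | succ m hm ih =>
    intro hmn
    have hmn' : m ≤ n := by omega
    have ih' := ih hmn'
    rw [Finset.sum_Icc_succ_top (by omega), Finset.sum_Icc_succ_top (by omega)]
    have hrw : ∑ k ∈ Finset.Icc 1 m, f k * g k + f (m+1) * g (m+1)
        - f (m+1) * (∑ k ∈ Finset.Icc 1 m, g k + g (m+1))
        = (∑ k ∈ Finset.Icc 1 m, f k * g k - f m * ∑ k ∈ Finset.Icc 1 m, g k)
          + (f m - f (m+1)) * ∑ k ∈ Finset.Icc 1 m, g k := by ring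
    rw [hrw]
    have h1 : |(f m - f (m+1)) * ∑ k ∈ Finset.Icc 1 m, g k|
        ≤ (f (m+1) - f m) * M := by
      rw [abs_mul]
      have hle : f m ≤ f (m+1) := hmono m hm (by omega)
      rw [abs_of_nonpos (by linarith), neg_sub]
      have := hS m hmn'
      have hM : 0 ≤ M := le_trans (abs_nonneg _) (hS 0 (by omega))
      exact mul_le_mul_of_nonneg_left this (by linarith)
    calc _ ≤ |∑ k ∈ Finset.Icc 1 m, f k * g k - f m * ∑ k ∈ Finset.Icc 1 m, g k|
          + |(f m - f (m+1)) * ∑ k ∈ Finset.Icc 1 m, g k| := abs_add_le _ _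
      _ ≤ M * (f m - f 1) + (f (m+1) - f m) * M := add_le_add ih' h1
      _ = M * (f (m+1) - f 1) := by ring

lemma abel_bound_s5 (f g : ℕ → ℝ) (M : ℝ) (n : ℕ) (hn : 1 ≤ n)
    (hf1 : 0 ≤ f 1)
    (hmono : ∀ k, 1 ≤ k → k + 1 ≤ n → f k ≤ f (k+1))
    (hS : ∀ K, K ≤ n → |∑ k ∈ Finset.Icc 1 K, g k| ≤ M) :
    |∑ k ∈ Finset.Icc 1 n, f k * g k| ≤ 2 * M * f n := by
  have hM : 0 ≤ M := le_trans (abs_nonneg _) (hS 0 (by omega))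
  have h1 := abel_aux f g M n hmono hS n hn le_rfl
  have h2 := hS n le_rfl
  have hf1n : f 1 ≤ f n := by
    have gen : ∀ m, 1 ≤ m → m ≤ n → f 1 ≤ f m := by
      intro m hm
      induction m, hm using Nat.le_induction with
      | base => intro _; exact le_rfl
      | succ m hm ih =>
        intro h
        exact (ih (by omega)).trans (hmono m hm (by omega))
    exact gen n hn le_rfl
  have hfn : 0 ≤ f n := hf1.trans hf1n
  calc |∑ k ∈ Finset.Icc 1 n, f k * g k|
      ≤ |∑ k ∈ Finset.Icc 1 n, f k * g k - f n * ∑ k ∈ Finset.Icc 1 n, g k|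
        + |f n * ∑ k ∈ Finset.Icc 1 n, g k| := by
          calc |∑ k ∈ Finset.Icc 1 n, f k * g k|
              = |(∑ k ∈ Finset.Icc 1 n, f k * g k - f n * ∑ k ∈ Finset.Icc 1 n, g k)
                + f n * ∑ k ∈ Finset.Icc 1 n, g k| := by congr 1; ring
            _ ≤ _ := abs_add_le _ _
    _ ≤ M * (f n - f 1) + f n * M := by
        refine add_le_add h1 ?_
        rw [abs_mul, abs_of_nonneg hfn]
        exact mul_le_mul_of_nonneg_left h2 hfn
    _ ≤ 2 * M * f n := by nlinarith

lemma key_eq (a t : ℕ) (ha : 1 ≤ a) (c : ℕ) :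
    ∑ r ∈ Ires a, Real.sin (2 * Real.pi * (r : ℝ) * (c : ℝ) / (a : ℝ)) * Sigma2 a t 0 r
      = 2 * ∑ k ∈ Finset.Icc 1 (t / 2),
          Real.sin (2 * Real.pi * (k : ℝ) / ((a : ℝ) * (t : ℝ))) *
            Real.sin (2 * Real.pi * (k : ℝ) * (c : ℝ) / (a : ℝ)) := by
  have haZ : (0:ℤ) < (a:ℤ) := by exact_mod_cast ha
  have haR : (0:ℝ) < (a:ℝ) := by exact_mod_cast ha
  set φ : ℕ → ℤ := fun k =>
    if (k:ℤ) % (a:ℤ) ≤ ((a/2 : ℕ) : ℤ) then (k:ℤ) % (a:ℤ) else (k:ℤ) % (a:ℤ) - (a:ℤ) with hφ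
  have hmem : ∀ k : ℕ, φ k ∈ Ires a := by
    intro k
    have h0 : 0 ≤ (k:ℤ) % (a:ℤ) := Int.emod_nonneg _ (by omega)
    have h1 : (k:ℤ) % (a:ℤ) < (a:ℤ) := Int.emod_lt_of_pos _ haZ
    simp only [Ires, Finset.mem_Icc, hφ]
    split_ifs with h <;> constructor <;> omega
  have hmod : ∀ k : ℕ, φ k % (a:ℤ) = (k:ℤ) % (a:ℤ) := by
    intro k
    simp only [hφ]
    split_ifs with h
    · exact Int.emod_emod_of_dvd _ dvd_rfl
    · rw [Int.sub_emod_right]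
      exact Int.emod_emod_of_dvd _ dvd_rfl
  have hinj : ∀ r₁ ∈ Ires a, ∀ r₂ ∈ Ires a, r₁ % (a:ℤ) = r₂ % (a:ℤ) → r₁ = r₂ := by
    intro r₁ h₁ r₂ h₂ h
    have hdvd : (a:ℤ) ∣ r₂ - r₁ := Int.ModEq.dvd h
    simp only [Ires, Finset.mem_Icc] at h₁ h₂
    have h0 : r₂ - r₁ = 0 := by
      refine Int.eq_zero_of_abs_lt_dvd hdvd ?_
      rw [abs_lt]
      constructor <;> omega
    omega
  have hweight : ∀ (r : ℤ) (k : ℕ), (k:ℤ) % (a:ℤ) = r % (a:ℤ) →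
      Real.sin (2 * Real.pi * (r : ℝ) * (c : ℝ) / (a : ℝ))
        = Real.sin (2 * Real.pi * (k : ℝ) * (c : ℝ) / (a : ℝ)) := by
    intro r k h
    have hdvd : (a:ℤ) ∣ r - (k:ℤ) := Int.ModEq.dvd h
    obtain ⟨m, hm⟩ := hdvd
    have hrC : (r:ℝ) = (k:ℝ) + (a:ℝ) * (m:ℝ) := by
      have h2 : ((r - (k:ℤ) : ℤ) : ℝ) = (((a:ℤ) * m : ℤ) : ℝ) := by rw [hm]
      push_cast at h2
      linarith
    have harg : 2 * Real.pi * (r : ℝ) * (c : ℝ) / (a : ℝ)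
        = 2 * Real.pi * (k : ℝ) * (c : ℝ) / (a : ℝ) + ((m * (c:ℤ) : ℤ) : ℝ) * (2 * Real.pi) := by
      rw [hrC]
      push_cast
      field_simp
    rw [harg, Real.sin_add_int_mul_two_pi]
  have hfilter : ∀ r ∈ Ires a,
      (Finset.Icc 1 (t/2)).filter (fun k : ℕ => (k:ℤ) % (a:ℤ) = r % (a:ℤ))
        = (Finset.Icc 1 (t/2)).filter (fun k : ℕ => φ k = r) := by
    intro r hr
    refine Finset.filter_congr (fun k _ => ?_)
    constructor
    · intro h
      exact hinj (φ k) (hmem k) r hr (by rw [hmod k, h])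
    · intro h
      rw [← h, hmod k]
  calc ∑ r ∈ Ires a, Real.sin (2 * Real.pi * (r : ℝ) * (c : ℝ) / (a : ℝ)) * Sigma2 a t 0 r
      = ∑ r ∈ Ires a, ∑ k ∈ (Finset.Icc 1 (t/2)).filter (fun k : ℕ => φ k = r),
          2 * (Real.sin (2 * Real.pi * (k : ℝ) / ((a : ℝ) * (t : ℝ))) *
            Real.sin (2 * Real.pi * (k : ℝ) * (c : ℝ) / (a : ℝ))) := by
        refine Finset.sum_congr rfl (fun r hr => ?_)
        rw [Sigma2, hfilter r hr, Finset.mul_sum, Finset.mul_sum]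
        refine Finset.sum_congr rfl (fun k hk => ?_)
        have hφk : φ k = r := (Finset.mem_filter.mp hk).2
        have hcong : (k:ℤ) % (a:ℤ) = r % (a:ℤ) := by rw [← hφk, hmod k]
        rw [hweight r k hcong]
        simp only [Int.cast_zero]
        norm_num
        ring
    _ = ∑ k ∈ Finset.Icc 1 (t/2),
          2 * (Real.sin (2 * Real.pi * (k : ℝ) / ((a : ℝ) * (t : ℝ))) *
            Real.sin (2 * Real.pi * (k : ℝ) * (c : ℝ) / (a : ℝ))) :=
        Finset.sum_fiberwise_of_maps_to (fun k _ => hmem k) _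
    _ = _ := by rw [← Finset.mul_sum]

lemma pointwise_bound (a t c : ℕ) (ha : 2 ≤ a) (hc : ¬ (a ∣ c)) :
    |2 * ∑ k ∈ Finset.Icc 1 (t / 2),
        Real.sin (2 * Real.pi * (k : ℝ) / ((a : ℝ) * (t : ℝ))) *
          Real.sin (2 * Real.pi * (k : ℝ) * (c : ℝ) / (a : ℝ))| ≤ 2 * Real.pi := by
  rcases Nat.eq_zero_or_pos (t/2) with h0 | h0
  · rw [h0]
    simp
    positivity
  · have ht2 : 2 ≤ t := by omega
    have haR : (2:ℝ) ≤ (a:ℝ) := by exact_mod_cast ha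
    have haR0 : (0:ℝ) < (a:ℝ) := by linarith
    have htR : (2:ℝ) ≤ (t:ℝ) := by exact_mod_cast ht2
    have htR0 : (0:ℝ) < (t:ℝ) := by linarith
    have hfreq : 2/(a:ℝ) ≤ |Real.sin (Real.pi * c / a)| := sin_freq_lower a c ha hc
    have hhalf : (2 * Real.pi * (c:ℝ) / (a:ℝ))/2 = Real.pi * c / a := by ring
    have hne : Real.sin ((2 * Real.pi * (c:ℝ) / (a:ℝ))/2) ≠ 0 := by
      rw [hhalf]
      intro h
      rw [h, abs_zero] at hfreq
      have : (0:ℝ) < 2/(a:ℝ) := by positivity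
      linarith
    have hS : ∀ K, K ≤ t/2 → |∑ k ∈ Finset.Icc 1 K,
        Real.sin (2 * Real.pi * (k : ℝ) * (c : ℝ) / (a : ℝ))| ≤ (a:ℝ)/2 := by
      intro K _
      have h1 : ∑ k ∈ Finset.Icc 1 K, Real.sin (2 * Real.pi * (k : ℝ) * (c : ℝ) / (a : ℝ))
          = ∑ k ∈ Finset.Icc 1 K, Real.sin ((k:ℝ) * (2 * Real.pi * (c:ℝ) / (a:ℝ))) := by
        refine Finset.sum_congr rfl (fun k _ => ?_)
        congr 1
        ring
      rw [h1]
      refine (sum_sin_bound _ hne K).trans ?_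
      rw [hhalf]
      have h2 : (0:ℝ) < 2/(a:ℝ) := by positivity
      calc 1 / |Real.sin (Real.pi * c / a)| ≤ 1 / (2/(a:ℝ)) :=
            one_div_le_one_div_of_le h2 hfreq
        _ = (a:ℝ)/2 := by field_simp
    have hmono : ∀ k, 1 ≤ k → k + 1 ≤ t/2 →
        Real.sin (2 * Real.pi * (k:ℝ) / ((a:ℝ) * (t:ℝ)))
          ≤ Real.sin (2 * Real.pi * ((k+1:ℕ):ℝ) / ((a:ℝ) * (t:ℝ))) := by
      intro k hk hk1
      have hkk : (2:ℝ) * ((k:ℝ)+1) ≤ (t:ℝ) := by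
        have h3 : 2 * (k+1) ≤ t := by omega
        exact_mod_cast h3
      apply Real.sin_le_sin_of_le_of_le_pi_div_two
      · have : (0:ℝ) ≤ 2 * Real.pi * (k:ℝ) / ((a:ℝ) * (t:ℝ)) := by positivity
        linarith [Real.pi_pos]
      · push_cast
        rw [div_le_div_iff₀ (by positivity) two_pos]
        have h1 : (2:ℝ)*(t:ℝ) ≤ (a:ℝ)*(t:ℝ) := by nlinarith
        have h2 : (4:ℝ)*((k:ℝ)+1) ≤ (a:ℝ)*(t:ℝ) := by linarith
        nlinarith [mul_le_mul_of_nonneg_left h2 Real.pi_pos.le]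
      · push_cast
        gcongr
        linarith
    have hf1 : (0:ℝ) ≤ Real.sin (2 * Real.pi * ((1:ℕ):ℝ) / ((a:ℝ) * (t:ℝ))) := by
      apply Real.sin_nonneg_of_nonneg_of_le_pi
      · positivity
      · rw [div_le_iff₀ (by positivity)]
        push_cast
        have h1 : (2:ℝ)*(t:ℝ) ≤ (a:ℝ)*(t:ℝ) := by nlinarith
        have h2 : (4:ℝ) ≤ (a:ℝ)*(t:ℝ) := by linarith
        nlinarith [mul_le_mul_of_nonneg_left h2 Real.pi_pos.le, Real.pi_pos]
    have habel := abel_bound_s5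
      (fun k : ℕ => Real.sin (2 * Real.pi * (k:ℝ) / ((a:ℝ) * (t:ℝ))))
      (fun k : ℕ => Real.sin (2 * Real.pi * (k:ℝ) * (c:ℝ) / (a:ℝ)))
      ((a:ℝ)/2) (t/2) h0 hf1 hmono hS
    have hfn : Real.sin (2 * Real.pi * ((t/2 : ℕ):ℝ) / ((a:ℝ) * (t:ℝ))) ≤ Real.pi / (a:ℝ) := by
      have h2n : (2:ℝ) * ((t/2 : ℕ):ℝ) ≤ (t:ℝ) := by
        have h3 : 2 * (t/2) ≤ t := by omega
        exact_mod_cast h3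
      have harg0 : (0:ℝ) ≤ 2 * Real.pi * ((t/2 : ℕ):ℝ) / ((a:ℝ) * (t:ℝ)) := by positivity
      calc Real.sin (2 * Real.pi * ((t/2 : ℕ):ℝ) / ((a:ℝ) * (t:ℝ)))
          ≤ 2 * Real.pi * ((t/2 : ℕ):ℝ) / ((a:ℝ) * (t:ℝ)) := Real.sin_le harg0
        _ ≤ Real.pi / (a:ℝ) := by
            rw [div_le_div_iff₀ (by positivity) haR0]
            have h4 := mul_le_mul_of_nonneg_left h2n
              (by positivity : (0:ℝ) ≤ Real.pi * (a:ℝ))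
            nlinarith [h4]
    rw [abs_mul, abs_two]
    have hfnn : (0:ℝ) ≤ Real.sin (2 * Real.pi * ((t/2 : ℕ):ℝ) / ((a:ℝ) * (t:ℝ))) := by
      apply Real.sin_nonneg_of_nonneg_of_le_pi
      · positivity
      · have h2n : (2:ℝ) * ((t/2 : ℕ):ℝ) ≤ (t:ℝ) := by
          have h3 : 2 * (t/2) ≤ t := by omega
          exact_mod_cast h3
        rw [div_le_iff₀ (by positivity)]
        have h7 : (t:ℝ) ≤ (a:ℝ)*(t:ℝ) := by nlinarith
        nlinarith [Real.pi_pos, h2n,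
          mul_le_mul_of_nonneg_left h2n Real.pi_pos.le,
          mul_le_mul_of_nonneg_left h7 Real.pi_pos.le]
    have h5 : (a:ℝ) * Real.sin (2 * Real.pi * ((t/2 : ℕ):ℝ) / ((a:ℝ) * (t:ℝ)))
        ≤ (a:ℝ) * (Real.pi / (a:ℝ)) :=
      mul_le_mul_of_nonneg_left hfn (by positivity)
    have h6 : (a:ℝ) * (Real.pi / (a:ℝ)) = Real.pi := by field_simp
    linarith [habel, h5, h6]

theorem statement5 (a t : ℕ → ℕ)
    (hapos : ∀ N, 0 < a N) (htpos : ∀ N, 0 < t N)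
    (hcop : ∀ N, Nat.Coprime (a N) (t N))
    (haN : (fun N => (a N : ℝ)) =O[atTop] (fun N => (N : ℝ)))
    (htN : (fun N => (t N : ℝ)) =O[atTop] (fun N => (N : ℝ)))
    (hao : (fun N => (a N : ℝ)) =o[atTop] (fun N => (t N : ℝ))) :
    (fun N => ∑ r ∈ Ires (a N),
        Real.sin (2 * Real.pi * (r : ℝ) * (invMod (t N) (a N) : ℝ) / (a N : ℝ)) *
          Sigma2 (a N) (t N) 0 r)
      =O[atTop] (fun _ => (1 : ℝ)) := by
  rw [isBigO_iff]
  refine ⟨2 * Real.pi, Filter.Eventually.of_forall (fun N => ?_)⟩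
  simp only [norm_one, mul_one, Real.norm_eq_abs]
  rcases eq_or_lt_of_le (Nat.succ_le_of_lt (hapos N)) with h1 | h2
  · -- a N = 1
    have ha1 : a N = 1 := h1.symm
    have : ∑ r ∈ Ires (a N),
        Real.sin (2 * Real.pi * (r : ℝ) * (invMod (t N) (a N) : ℝ) / (a N : ℝ)) *
          Sigma2 (a N) (t N) 0 r = 0 := by
      rw [ha1]
      simp [Ires]
    rw [this, abs_zero]
    positivity
  · -- a N ≥ 2
    have ha2 : 2 ≤ a N := h2
    have hcdvd : ¬ (a N ∣ invMod (t N) (a N)) := by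
      intro hdvd
      haveI : NeZero (a N) := ⟨by omega⟩
      haveI : Fact (1 < a N) := ⟨by omega⟩
      have hu : IsUnit ((t N : ZMod (a N))) :=
        (ZMod.isUnit_iff_coprime _ _).mpr ((hcop N).symm)
      have hinv : ((t N : ZMod (a N)))⁻¹ * (t N : ZMod (a N)) = 1 :=
        ZMod.inv_mul_of_unit _ hu
      have h0 : ((invMod (t N) (a N) : ℕ) : ZMod (a N)) = ((t N : ZMod (a N)))⁻¹ :=
        ZMod.natCast_rightInverse _
      have hz : ((invMod (t N) (a N) : ℕ) : ZMod (a N)) = 0 :=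
        (ZMod.natCast_eq_zero_iff _ _).mpr hdvd
      rw [h0] at hz
      rw [hz, zero_mul] at hinv
      exact zero_ne_one hinv
    rw [key_eq (a N) (t N) (by omega) (invMod (t N) (a N))]
    exact pointwise_bound (a N) (t N) (invMod (t N) (a N)) ha2 hcdvd
end
end
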